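/- Let d ≥ 1, let s ∈ ℝ^d, let u ∈ ℝ^d be a unit vector, and let s_j = s + a•u and s_k = s + b•u with a, b > 0 be two sites on the same ray emanating from s. Let γ_j, γ_k > 1. Then ball(s,s_j,γ_j) ⊆ ball(s,s_k,γ_k) if and only if both a/(γ_j + 1) ≤ b/(γ_k + 1) and a/(γ_j − 1) ≤ b/(γ_k − 1), i.e., if and only if t*(s,s_j,γ_j) ≤ t*(s,s_k,γ_k) and t†(s,s_j,γ_j) ≤ t†(s,s_k,γ_k). -/

import Mathlib

open Metric

private lemma apollo_scalar (a γ n t : ℝ) (hg : 0 < γ^2-1) :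
    γ^2*n ≤ n - 2*(a*t) + a^2 ↔
      n + 2*(a/(γ^2-1)*t) + (a/(γ^2-1))^2 ≤ (a*γ/(γ^2-1))^2 := by
  have key : (a*γ/(γ^2-1))^2 - (n + 2*(a/(γ^2-1)*t) + (a/(γ^2-1))^2)
      = ((n - 2*(a*t) + a^2) - γ^2*n) / (γ^2-1) := by
    field_simp
    ring
  constructor <;> intro h
  · rw [← sub_nonneg, key]
    exact div_nonneg (by linarith) hg.le
  · rw [← sub_nonneg, key] at h
    have := (le_div_iff₀ hg).mp h
    linarith

private lemma closedBall_subset_imp {E : Type*} [NormedAddCommGroup E] [NormedSpace ℝ E]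
    (c1 c2 : E) (r1 r2 : ℝ) (hr1 : 0 ≤ r1) (v : E) (hv : ‖v‖ = 1)
    (h : closedBall c1 r1 ⊆ closedBall c2 r2) :
    dist c1 c2 + r1 ≤ r2 := by
  rcases eq_or_ne c1 c2 with rfl | hne
  · have hmem : c1 + r1 • v ∈ closedBall c1 r1 := by
      simp [dist_eq_norm, norm_smul, hv, abs_of_nonneg hr1]
    have h2 := h hmem
    rw [mem_closedBall, dist_eq_norm, add_sub_cancel_left, norm_smul, hv, mul_one,
      Real.norm_eq_abs, abs_of_nonneg hr1] at h2
    simpa using h2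
  · have hd : 0 < ‖c1 - c2‖ := by
      rw [norm_pos_iff, sub_ne_zero]; exact hne
    set w : E := ‖c1 - c2‖⁻¹ • (c1 - c2) with hw
    have hmem : c1 + r1 • w ∈ closedBall c1 r1 := by
      simp only [mem_closedBall, dist_eq_norm, add_sub_cancel_left, hw, smul_smul, norm_smul]
      rw [Real.norm_eq_abs, abs_of_nonneg (by positivity), mul_assoc,
        inv_mul_cancel₀ hd.ne', mul_one]
    have h2 := h hmem
    have key : c1 + r1 • w - c2 = (1 + r1 * ‖c1 - c2‖⁻¹) • (c1 - c2) := by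
      rw [hw, smul_smul]; module
    rw [mem_closedBall, dist_eq_norm, key, norm_smul,
      Real.norm_eq_abs, abs_of_nonneg (by positivity), add_mul, one_mul, mul_assoc,
      inv_mul_cancel₀ hd.ne', mul_one] at h2
    rw [dist_eq_norm]
    linarith

private lemma apollo_eq (d : ℕ) (s u : EuclideanSpace ℝ (Fin d)) (hu : ‖u‖ = 1)
    (a γ : ℝ) (ha : 0 < a) (hγ : 1 < γ) :
    {p : EuclideanSpace ℝ (Fin d) | γ * ‖p - s‖ ≤ ‖p - (s + a • u)‖} =
      closedBall (s - (a / (γ ^ 2 - 1)) • u) (a * γ / (γ ^ 2 - 1)) := by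
  have hg : (0:ℝ) < γ ^ 2 - 1 := by nlinarith
  ext p
  simp only [Set.mem_setOf_eq, mem_closedBall, dist_eq_norm]
  have h1 : p - (s + a • u) = (p - s) - a • u := by abel
  have h2 : p - (s - (a / (γ ^ 2 - 1)) • u) = (p - s) + (a / (γ ^ 2 - 1)) • u := by abel
  rw [h1, h2]
  set q := p - s with hq
  rw [← pow_le_pow_iff_left₀ (by positivity) (norm_nonneg _) two_ne_zero,
    ← pow_le_pow_iff_left₀ (norm_nonneg _) (by positivity) two_ne_zero]
  rw [norm_sub_sq_real, norm_add_sq_real, mul_pow, real_inner_smul_right,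
    real_inner_smul_right, norm_smul, norm_smul, hu, mul_one, mul_one,
    Real.norm_eq_abs, Real.norm_eq_abs, sq_abs, sq_abs]
  exact apollo_scalar a γ (‖q‖^2) (inner ℝ q u) hg

/-- For sites on a common ray from `s`, inclusion of Apollonian balls is characterized by
the inequalities `t* ≤ t*` and `t† ≤ t†`. -/
theorem apollonian_ball_subset_iff_on_ray (d : ℕ) (hd : 1 ≤ d)
    (s u : EuclideanSpace ℝ (Fin d)) (hu : ‖u‖ = 1)
    (a b γj γk : ℝ) (ha : 0 < a) (hb : 0 < b) (hγj : 1 < γj) (hγk : 1 < γk) :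
    ({p : EuclideanSpace ℝ (Fin d) | γj * ‖p - s‖ ≤ ‖p - (s + a • u)‖} ⊆
        {p : EuclideanSpace ℝ (Fin d) | γk * ‖p - s‖ ≤ ‖p - (s + b • u)‖}) ↔
      (a / (γj + 1) ≤ b / (γk + 1) ∧ a / (γj - 1) ≤ b / (γk - 1)) := by
  have hgj : (0:ℝ) < γj ^ 2 - 1 := by nlinarith
  have hgk : (0:ℝ) < γk ^ 2 - 1 := by nlinarith
  rw [apollo_eq d s u hu a γj ha hγj, apollo_eq d s u hu b γk hb hγk]
  have hdist : dist (s - (a / (γj ^ 2 - 1)) • u) (s - (b / (γk ^ 2 - 1)) • u)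
      = |b / (γk ^ 2 - 1) - a / (γj ^ 2 - 1)| := by
    rw [dist_eq_norm]
    have h3 : (s - (a / (γj ^ 2 - 1)) • u) - (s - (b / (γk ^ 2 - 1)) • u)
        = (b / (γk ^ 2 - 1) - a / (γj ^ 2 - 1)) • u := by module
    rw [h3, norm_smul, hu, mul_one, Real.norm_eq_abs]
  have eA : a * γj / (γj ^ 2 - 1) - a / (γj ^ 2 - 1) = a / (γj + 1) := by
    rw [div_sub_div_same, eq_div_iff (by linarith)]
    field_simp
    ring
  have eB : a * γj / (γj ^ 2 - 1) + a / (γj ^ 2 - 1) = a / (γj - 1) := by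
    rw [← add_div, eq_div_iff (by linarith)]
    field_simp
    ring
  have eC : b * γk / (γk ^ 2 - 1) - b / (γk ^ 2 - 1) = b / (γk + 1) := by
    rw [div_sub_div_same, eq_div_iff (by linarith)]
    field_simp
    ring
  have eD : b * γk / (γk ^ 2 - 1) + b / (γk ^ 2 - 1) = b / (γk - 1) := by
    rw [← add_div, eq_div_iff (by linarith)]
    field_simp
    ring
  constructor
  · intro h
    have key := closedBall_subset_imp _ _ _ _ (by positivity) u hu h
    rw [hdist] at key
    have h1 := le_abs_self (b / (γk ^ 2 - 1) - a / (γj ^ 2 - 1))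
    have h2 := neg_abs_le (b / (γk ^ 2 - 1) - a / (γj ^ 2 - 1))
    exact ⟨by rw [← eA, ← eC]; linarith, by rw [← eB, ← eD]; linarith⟩
  · rintro ⟨h1, h2⟩
    rw [← eA, ← eC] at h1
    rw [← eB, ← eD] at h2
    apply closedBall_subset_closedBall'
    rw [hdist, add_comm]
    have habs : |b / (γk ^ 2 - 1) - a / (γj ^ 2 - 1)|
        ≤ b * γk / (γk ^ 2 - 1) - a * γj / (γj ^ 2 - 1) :=
      abs_le.mpr ⟨by linarith, by linarith⟩
    linarith
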